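/- Fix an integer q ≥ 1. Let L depend differentiably (coefficientwise) on the variables t_q and t_p for all p ≥ 1, with L ∈ A⁺ of the form L = Λ + u₀ + u₋₁Λ⁻¹ + ⋯ (leading coefficient 1). If the Zakharov–Shabat equations ∂(L^q)₊/∂t_p − ∂(L^p)₊/∂t_q + [(L^q)₊, (L^p)₊] = 0 hold for every p ≥ 1, then the Lax equation ∂L/∂t_q = [(L^q)₊, L] holds. -/

import Mathlib

noncomputable section

/-- Formal difference operators `X = ∑ₖ aₖ Λᵏ`, encoded by their coefficient functions:
`X k n` is the value `aₖ(n)` of the coefficient of `Λᵏ`. -/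
abbrev DOp : Type := ℤ → ℤ → ℂ

/-- Product of difference operators, determined by `Λᵏ a = (a ∘ (·+k)) Λᵏ`:
the coefficient of `Λᵐ` in `X*Y` at `n` is `∑_{k+l=m} aₖ(n) bₗ(n+k)`. -/
def dmul (X Y : DOp) : DOp := fun m n => ∑ᶠ k : ℤ, X k n * Y (m - k) (n + k)

/-- Commutator `[X,Y] = XY - YX`. -/
def dcomm (X Y : DOp) : DOp := dmul X Y - dmul Y X

/-- Truncation `X_{≥K}`. -/
def truncGe (K : ℤ) (X : DOp) : DOp := fun k n => if K ≤ k then X k n else 0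
/-- Truncation `X_{≤K}`. -/
def truncLe (K : ℤ) (X : DOp) : DOp := fun k n => if k ≤ K then X k n else 0
/-- Truncation `X_{>K}`. -/
def truncGt (K : ℤ) (X : DOp) : DOp := fun k n => if K < k then X k n else 0
/-- Truncation `X_{<K}`. -/
def truncLt (K : ℤ) (X : DOp) : DOp := fun k n => if k < K then X k n else 0

/-- `X₊ := X_{≥0}`. -/
def dpos (X : DOp) : DOp := truncGe 0 X

/-- `X₋ := X_{<0}`. -/
def dneg (X : DOp) : DOp := truncLt 0 X

/-- The shift operator `Λ`. -/
def dlam : DOp := fun k _ => if k = 1 then 1 else 0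

/-- The identity operator. -/
def done : DOp := fun k _ => if k = 0 then 1 else 0

/-- Powers of a difference operator. -/
def dpow (X : DOp) : ℕ → DOp
  | 0 => done
  | n + 1 => dmul (dpow X n) X

/-- The residue: coefficient of `Λ⁰`. -/
def dres (X : DOp) : ℤ → ℂ := X 0

/-- The trace: `tr X = ∑ₙ a₀(n)`. -/
def dtr (X : DOp) : ℂ := ∑ᶠ n : ℤ, X 0 n

/-- `A⁺`: coefficients vanish in all sufficiently high degrees. -/
def IsUpper (X : DOp) : Prop := ∃ K : ℤ, ∀ k : ℤ, K < k → X k = 0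

/-- `A⁻`: coefficients vanish in all sufficiently low degrees. -/
def IsLower (X : DOp) : Prop := ∃ K : ℤ, ∀ k : ℤ, k < K → X k = 0

/-- `A⁰`: only finitely many nonzero coefficient functions. -/
def IsBdd (X : DOp) : Prop := {k : ℤ | X k ≠ 0}.Finite

/-- All coefficient functions finitely supported (finite total support). -/
def FinSuppOp (X : DOp) : Prop := (Function.support fun pr : ℤ × ℤ => X pr.1 pr.2).Finite

/-- Membership in `𝔄 = A⁺ ⊕ A⁻`. -/
def InA (x : DOp × DOp) : Prop := IsUpper x.1 ∧ IsLower x.2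

/-- Componentwise commutator on `𝔄`. -/
def pcomm (x y : DOp × DOp) : DOp × DOp := (dcomm x.1 y.1, dcomm x.2 y.2)

/-- Trace pairing `⟨(X,X̄),(Y,Ȳ)⟩ = tr(XY) + tr(X̄Ȳ)` on `𝔄`. -/
def ip (x y : DOp × DOp) : ℂ := dtr (dmul x.1 y.1) + dtr (dmul x.2 y.2)


namespace LaxAux

/-- `X k = 0` for all `k > a`. -/
def UB (a : ℤ) (X : DOp) : Prop := ∀ k : ℤ, a < k → X k = 0

lemma UB.mono {a b : ℤ} (h : a ≤ b) {X : DOp} (hX : UB a X) : UB b X :=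
  fun k hk => hX k (lt_of_le_of_lt h hk)

lemma UB.sub {a : ℤ} {X Y : DOp} (hX : UB a X) (hY : UB a Y) : UB a (X - Y) := by
  intro k hk
  have := hX k hk; have := hY k hk
  funext n
  simp [Pi.sub_apply, hX k hk, hY k hk]

lemma support_subset {a b : ℤ} {X Y : DOp} (hX : UB a X) (hY : UB b Y) (m n : ℤ) :
    Function.support (fun k => X k n * Y (m - k) (n + k)) ⊆ ↑(Finset.Icc (m - b) a) := by
  intro k hk
  simp only [Function.mem_support] at hk
  simp only [Finset.coe_Icc, Set.mem_Icc]
  constructor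
  · by_contra h; push_neg at h
    have hb : b < m - k := by omega
    simp [hY _ hb] at hk
  · by_contra h; push_neg at h
    simp [hX _ h] at hk

lemma dmul_coeff_sub {a b : ℤ} {X Y : DOp} (hX : UB a X) (hY : UB b Y) {m n : ℤ}
    {s : Finset ℤ} (hs : Finset.Icc (m - b) a ⊆ s) :
    dmul X Y m n = ∑ k ∈ s, X k n * Y (m - k) (n + k) :=
  finsum_eq_sum_of_support_subset _
    ((support_subset hX hY m n).trans (Finset.coe_subset.mpr hs))

lemma dmul_coeff {a b : ℤ} {X Y : DOp} (hX : UB a X) (hY : UB b Y) (m n : ℤ) :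
    dmul X Y m n = ∑ k ∈ Finset.Icc (m - b) a, X k n * Y (m - k) (n + k) :=
  dmul_coeff_sub hX hY (subset_refl _)

lemma UB.dmul {a b : ℤ} {X Y : DOp} (hX : UB a X) (hY : UB b Y) :
    UB (a + b) (_root_.dmul X Y) := by
  intro m hm
  funext n
  show _root_.dmul X Y m n = 0
  rw [dmul_coeff hX hY]
  apply Finset.sum_eq_zero
  intro k hk
  simp only [Finset.mem_Icc] at hk
  have hb : b < m - k := by omega
  simp [hY _ hb]

lemma dmul_done (X : DOp) : dmul X done = X := by
  funext m n
  have h : ∀ k : ℤ, k ≠ m → X k n * done (m - k) (n + k) = 0 := by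
    intro k hk
    have : m - k ≠ 0 := by omega
    simp [done, this]
  rw [show dmul X done m n = ∑ᶠ k : ℤ, X k n * done (m - k) (n + k) from rfl,
    finsum_eq_single _ m h]
  simp [done]

lemma done_dmul (X : DOp) : dmul done X = X := by
  funext m n
  have h : ∀ k : ℤ, k ≠ 0 → done k n * X (m - k) (n + k) = 0 := by
    intro k hk; simp [done, hk]
  rw [show dmul done X m n = ∑ᶠ k : ℤ, done k n * X (m - k) (n + k) from rfl,
    finsum_eq_single _ 0 h]
  simp [done]

lemma dmul_sub_right {a b : ℤ} {X Y Z : DOp} (hX : UB a X) (hY : UB b Y) (hZ : UB b Z)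
    (m n : ℤ) :
    dmul X (Y - Z) m n = dmul X Y m n - dmul X Z m n := by
  rw [dmul_coeff hX (hY.sub hZ), dmul_coeff hX hY, dmul_coeff hX hZ,
    ← Finset.sum_sub_distrib]
  apply Finset.sum_congr rfl
  intro k _
  simp [Pi.sub_apply, mul_sub]

lemma dmul_sub_left {a b : ℤ} {X Y Z : DOp} (hY : UB b Y) (hZ : UB b Z) (hX : UB a X)
    (m n : ℤ) :
    dmul (Y - Z) X m n = dmul Y X m n - dmul Z X m n := by
  rw [dmul_coeff (hY.sub hZ) hX, dmul_coeff hY hX, dmul_coeff hZ hX,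
    ← Finset.sum_sub_distrib]
  apply Finset.sum_congr rfl
  intro k _
  simp [Pi.sub_apply, sub_mul]

lemma dmul_sum_left {ι : Type*} {a b : ℤ} {s : Finset ι} {F : ι → DOp} {Y : DOp}
    (hF : ∀ i ∈ s, UB a (F i)) (hY : UB b Y) (m n : ℤ) :
    dmul (fun k n => ∑ i ∈ s, F i k n) Y m n = ∑ i ∈ s, dmul (F i) Y m n := by
  have hS : UB a (fun k n => ∑ i ∈ s, F i k n) := by
    intro k hk
    funext n'
    show (∑ i ∈ s, F i k n') = 0
    exact Finset.sum_eq_zero fun i hi => by rw [hF i hi k hk]; rfl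
  rw [dmul_coeff hS hY]
  have : ∀ i ∈ s, dmul (F i) Y m n
      = ∑ k ∈ Finset.Icc (m - b) a, F i k n * Y (m - k) (n + k) :=
    fun i hi => dmul_coeff (hF i hi) hY m n
  rw [Finset.sum_congr rfl this, Finset.sum_comm]
  apply Finset.sum_congr rfl
  intro k _
  exact Finset.sum_mul _ _ _

lemma dmul_assoc {a b c : ℤ} {X Y Z : DOp} (hX : UB a X) (hY : UB b Y) (hZ : UB c Z) :
    dmul (dmul X Y) Z = dmul X (dmul Y Z) := by
  funext m n
  rw [dmul_coeff (hX.dmul hY) hZ, dmul_coeff hX (hY.dmul hZ)]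
  have hL : ∀ j ∈ Finset.Icc (m - c) (a + b),
      dmul X Y j n * Z (m - j) (n + j)
        = ∑ k ∈ Finset.Icc (m - (b + c)) a, X k n * Y (j - k) (n + k) * Z (m - j) (n + j) := by
    intro j hj
    simp only [Finset.mem_Icc] at hj
    rw [dmul_coeff_sub hX hY (s := Finset.Icc (m - (b + c)) a)
      (Finset.Icc_subset_Icc_left (by omega)), Finset.sum_mul]
  rw [Finset.sum_congr rfl hL, Finset.sum_comm]
  apply Finset.sum_congr rfl
  intro k hk
  simp only [Finset.mem_Icc] at hk
  have h1 : X k n * dmul Y Z (m - k) (n + k)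
      = ∑ᶠ l : ℤ, X k n * (Y l (n + k) * Z (m - k - l) (n + k + l)) := by
    have hfin : (Function.support fun l => Y l (n + k) * Z (m - k - l) (n + k + l)).Finite :=
      Set.Finite.subset (Finset.Icc (m - k - c) b).finite_toSet
        (support_subset hY hZ (m - k) (n + k))
    exact mul_finsum _ _
  have h2 : (fun l : ℤ => X k n * (Y l (n + k) * Z (m - k - l) (n + k + l)))
      = fun l : ℤ => (fun j : ℤ => X k n * Y (j - k) (n + k) * Z (m - j) (n + j)) (k + l) := by
    funext l
    have e0 : k + l - k = l := by ring
    have e1 : m - (k + l) = m - k - l := by ring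
    have e2 : n + (k + l) = n + k + l := by ring
    simp only [e0, e1, e2, mul_assoc]
  have h3 : ∑ᶠ j : ℤ, X k n * Y (j - k) (n + k) * Z (m - j) (n + j)
      = ∑ j ∈ Finset.Icc (m - c) (a + b), X k n * Y (j - k) (n + k) * Z (m - j) (n + j) := by
    apply finsum_eq_sum_of_support_subset
    intro j hj
    simp only [Function.mem_support] at hj
    simp only [Finset.coe_Icc, Set.mem_Icc]
    constructor
    · by_contra h; push_neg at h
      have hc : c < m - j := by omega
      simp [hZ _ hc] at hj
    · by_contra h; push_neg at h
      have hb : b < j - k := by omega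
      simp [hY _ hb] at hj
  have h4 : (∑ᶠ l : ℤ, (fun j : ℤ => X k n * Y (j - k) (n + k) * Z (m - j) (n + j)) (k + l))
      = ∑ᶠ j : ℤ, X k n * Y (j - k) (n + k) * Z (m - j) (n + j) :=
    finsum_comp_equiv (Equiv.addLeft k)
      (f := fun j : ℤ => X k n * Y (j - k) (n + k) * Z (m - j) (n + j))
  rw [h1, h2, h4, h3]

lemma ub_done : UB 0 done := by
  intro k hk; funext n
  show done k n = 0
  rw [done, if_neg (by omega)]

lemma dpow_ub {X : DOp} (h1 : UB 1 X) : ∀ p : ℕ, UB (p : ℤ) (dpow X p)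
  | 0 => ub_done
  | (p + 1) => by
      have := (dpow_ub h1 p).dmul h1
      rw [show ((p : ℤ) + 1) = ((p + 1 : ℕ) : ℤ) by push_cast; ring] at this
      exact this

lemma dpow_top {X : DOp} (h1 : UB 1 X) (htop : ∀ n, X 1 n = 1) :
    ∀ (p : ℕ) (n : ℤ), dpow X p (p : ℤ) n = 1 := by
  intro p
  induction p with
  | zero => intro n; simp [dpow, done]
  | succ p ih =>
    intro n
    show dmul (dpow X p) X ((p + 1 : ℕ) : ℤ) n = 1
    rw [dmul_coeff (dpow_ub h1 p) h1]
    have hIcc : Finset.Icc (((p + 1 : ℕ) : ℤ) - 1) ((p : ℤ)) = {(p : ℤ)} := by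
      rw [show (((p + 1 : ℕ) : ℤ) - 1) = (p : ℤ) by push_cast; ring, Finset.Icc_self]
    rw [hIcc, Finset.sum_singleton, ih, one_mul,
      show ((p + 1 : ℕ) : ℤ) - (p : ℤ) = 1 by push_cast; ring, htop]

lemma dpow_mul_comm {X : DOp} (h1 : UB 1 X) :
    ∀ p : ℕ, dmul (dpow X p) X = dmul X (dpow X p) := by
  intro p
  induction p with
  | zero => rw [show dpow X 0 = done from rfl, dmul_done, done_dmul]
  | succ p ih =>
    show dmul (dmul (dpow X p) X) X = dmul X (dmul (dpow X p) X)
    conv_lhs => rw [ih]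
    exact dmul_assoc h1 (dpow_ub h1 p) h1

lemma dcomm_dpow_self {X : DOp} (h1 : UB 1 X) (p : ℕ) : dcomm (dpow X p) X = 0 := by
  rw [dcomm, dpow_mul_comm h1 p, sub_self]

lemma dcomm_apply (X Y : DOp) (k n : ℤ) :
    dcomm X Y k n = dmul X Y k n - dmul Y X k n := rfl

/-- `∑_{i<p} X^i · W · X^(p-1-i)` (coefficientwise). -/
def Ssum (X W : DOp) (p : ℕ) : DOp :=
  fun m n => ∑ i ∈ Finset.range p, dmul (dmul (dpow X i) W) (dpow X (p - 1 - i)) m n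

lemma term_ub {X W : DOp} {w : ℤ} (h1 : UB 1 X) (hW : UB w W) {p i : ℕ} (hi : i < p) :
    UB ((p : ℤ) + w) (dmul (dmul (dpow X i) W) (dpow X (p - 1 - i))) := by
  have h := ((dpow_ub h1 i).dmul hW).dmul (dpow_ub h1 (p - 1 - i))
  exact h.mono (by omega)

lemma Ssum_ub {X W : DOp} {w : ℤ} (h1 : UB 1 X) (hW : UB w W) (p : ℕ) :
    UB ((p : ℤ) + w) (Ssum X W p) := by
  intro k hk
  funext n
  show (∑ i ∈ Finset.range p, dmul (dmul (dpow X i) W) (dpow X (p - 1 - i)) k n) = 0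
  apply Finset.sum_eq_zero
  intro i hi
  simp only [Finset.mem_range] at hi
  rw [term_ub h1 hW hi k hk]
  rfl

lemma Ssum_succ {X W : DOp} {w : ℤ} (h1 : UB 1 X) (hW : UB w W) (p : ℕ) (m n : ℤ) :
    Ssum X W (p + 1) m n = dmul (Ssum X W p) X m n + dmul (dpow X p) W m n := by
  show (∑ i ∈ Finset.range (p + 1),
      dmul (dmul (dpow X i) W) (dpow X (p + 1 - 1 - i)) m n) = _
  rw [Finset.sum_range_succ]
  have hlast : dmul (dmul (dpow X p) W) (dpow X (p + 1 - 1 - p)) = dmul (dpow X p) W := by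
    rw [show p + 1 - 1 - p = 0 by omega, show dpow X 0 = done from rfl, dmul_done]
  rw [hlast]
  congr 1
  have hterm : ∀ i ∈ Finset.range p,
      dmul (dmul (dpow X i) W) (dpow X (p + 1 - 1 - i)) m n
        = dmul (dmul (dmul (dpow X i) W) (dpow X (p - 1 - i))) X m n := by
    intro i hi
    simp only [Finset.mem_range] at hi
    have he : p + 1 - 1 - i = (p - 1 - i) + 1 := by omega
    rw [he, show dpow X ((p - 1 - i) + 1) = dmul (dpow X (p - 1 - i)) X from rfl,
      ← dmul_assoc ((dpow_ub h1 i).dmul hW) (dpow_ub h1 (p - 1 - i)) h1]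
  rw [Finset.sum_congr rfl hterm]
  exact (dmul_sum_left (F := fun i => dmul (dmul (dpow X i) W) (dpow X (p - 1 - i)))
    (fun i hi => term_ub h1 hW (Finset.mem_range.mp hi)) h1 m n).symm

lemma dcomm_dpow {X P : DOp} {e : ℤ} (h1 : UB 1 X) (hP : UB e P) :
    ∀ p : ℕ, dcomm P (dpow X p) = Ssum X (dcomm P X) p := by
  have hW : UB (e + 1) (dcomm P X) := by
    have h1' := hP.dmul h1
    have h2' := (h1.dmul hP).mono (by omega : 1 + e ≤ e + 1)
    exact h1'.sub h2'
  intro p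
  induction p with
  | zero =>
    funext m n
    show dmul P done m n - dmul done P m n = _
    rw [dmul_done, done_dmul]
    show P m n - P m n = (∑ i ∈ Finset.range 0, _)
    simp
  | succ p ih =>
    funext m n
    have hA := dpow_ub h1 p
    show dmul P (dmul (dpow X p) X) m n - dmul (dmul (dpow X p) X) P m n = _
    rw [Ssum_succ h1 hW p m n, ← ih]
    have e1 : dmul P (dmul (dpow X p) X) = dmul (dmul P (dpow X p)) X :=
      (dmul_assoc hP hA h1).symm
    have e2 : dmul (dmul (dpow X p) X) P = dmul (dpow X p) (dmul X P) :=
      dmul_assoc hA h1 hP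
    rw [e1, e2]
    have e3 : dmul (dcomm P (dpow X p)) X m n
        = dmul (dmul P (dpow X p)) X m n - dmul (dmul (dpow X p) P) X m n :=
      dmul_sub_left (hP.dmul hA) ((hA.dmul hP).mono (by omega : (p : ℤ) + e ≤ e + p)) h1 m n
    have e4 : dmul (dpow X p) (dcomm P X) m n
        = dmul (dpow X p) (dmul P X) m n - dmul (dpow X p) (dmul X P) m n :=
      dmul_sub_right hA (hP.dmul h1) ((h1.dmul hP).mono (by omega : 1 + e ≤ e + 1)) m n
    rw [e3, e4]
    have e5 : dmul (dmul (dpow X p) P) X = dmul (dpow X p) (dmul P X) :=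
      dmul_assoc hA hP h1
    rw [e5]
    ring

lemma Ssum_sub {X W1 W2 : DOp} {w : ℤ} (h1 : UB 1 X) (hW1 : UB w W1) (hW2 : UB w W2)
    (p : ℕ) (m n : ℤ) :
    Ssum X (W1 - W2) p m n = Ssum X W1 p m n - Ssum X W2 p m n := by
  show (∑ i ∈ Finset.range p, _) = (∑ i ∈ Finset.range p, _) - (∑ i ∈ Finset.range p, _)
  rw [← Finset.sum_sub_distrib]
  apply Finset.sum_congr rfl
  intro i hi
  have hA := dpow_ub h1 i
  have hB := dpow_ub h1 (p - 1 - i)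
  have e1 : dmul (dpow X i) (W1 - W2) = dmul (dpow X i) W1 - dmul (dpow X i) W2 := by
    funext m' n'
    exact dmul_sub_right hA hW1 hW2 m' n'
  rw [e1]
  exact dmul_sub_left (hA.dmul hW1) (hA.dmul hW2) hB m n

/-- Extraction of the single surviving coefficient at top degree. -/
lemma Ssum_term_coeff {X M : DOp} {d : ℤ} (h1 : UB 1 X) (htop : ∀ n, X 1 n = 1)
    (hM : UB d M) {p i : ℕ} (hi : i < p) (n : ℤ) :
    dmul (dmul (dpow X i) M) (dpow X (p - 1 - i)) ((p : ℤ) - 1 + d) n = M d (n + i) := by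
  have hA := dpow_ub h1 i
  have hB := hA.dmul hM
  have hC := dpow_ub h1 (p - 1 - i)
  have hc1 : ((p - 1 - i : ℕ) : ℤ) = (p : ℤ) - 1 - i := by omega
  rw [dmul_coeff hB hC]
  have hIcc : Finset.Icc (((p : ℤ) - 1 + d) - ((p - 1 - i : ℕ) : ℤ)) ((i : ℤ) + d)
      = {(i : ℤ) + d} := by
    rw [hc1, show ((p : ℤ) - 1 + d) - ((p : ℤ) - 1 - i) = (i : ℤ) + d by ring, Finset.Icc_self]
  rw [hIcc, Finset.sum_singleton]
  have hCtop : dpow X (p - 1 - i) (((p : ℤ) - 1 + d) - ((i : ℤ) + d)) (n + ((i : ℤ) + d)) = 1 := by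
    rw [show ((p : ℤ) - 1 + d) - ((i : ℤ) + d) = ((p - 1 - i : ℕ) : ℤ) by omega]
    exact dpow_top h1 htop (p - 1 - i) _
  rw [hCtop, mul_one]
  rw [dmul_coeff hA hM]
  have hIcc2 : Finset.Icc (((i : ℤ) + d) - d) ((i : ℤ)) = {(i : ℤ)} := by
    rw [show ((i : ℤ) + d) - d = (i : ℤ) by ring, Finset.Icc_self]
  rw [hIcc2, Finset.sum_singleton, dpow_top h1 htop i n, one_mul,
    show ((i : ℤ) + d) - (i : ℤ) = d by ring]

/-- The operator `∂L/∂t_q` at time `t`. -/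
def DLop (q : ℕ) (L : (ℕ → ℝ) → DOp) (t : ℕ → ℝ) : DOp :=
  fun k n => deriv (fun τ => L (Function.update t q τ) k n) (t q)

/-- `M = ∂L/∂t_q − [(L^q)₊, L]`; the goal is `M = 0`. -/
def Mop (q : ℕ) (L : (ℕ → ℝ) → DOp) (t : ℕ → ℝ) : DOp :=
  DLop q L t - dcomm (dpos (dpow (L t) q)) (L t)

end LaxAux

open LaxAux

/-- Lax equation from the Zakharov–Shabat equations.
If `L = Λ + u₀ + ⋯` depends (coefficientwise) differentiably on the times `t_p`, `p ≥ 1`,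
and the Zakharov–Shabat equations
`∂(L^q)₊/∂t_p − ∂(L^p)₊/∂t_q + [(L^q)₊, (L^p)₊] = 0` hold for every `p ≥ 1`,
then `∂L/∂t_q = [(L^q)₊, L]`. -/
theorem lax_from_zakharov_shabat (q : ℕ) (hq : 1 ≤ q)
    (L : (ℕ → ℝ) → DOp)
    (hform : ∀ t : ℕ → ℝ, truncGe 1 (L t) = dlam)
    (hdiff : ∀ (p : ℕ), 1 ≤ p → ∀ (t : ℕ → ℝ) (k n : ℤ),
      Differentiable ℝ (fun τ => L (Function.update t p τ) k n))
    (hZS : ∀ (p : ℕ), 1 ≤ p → ∀ (t : ℕ → ℝ) (k n : ℤ),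
      deriv (fun τ => dpos (dpow (L (Function.update t p τ)) q) k n) (t p)
        - deriv (fun τ => dpos (dpow (L (Function.update t q τ)) p) k n) (t q)
        + dcomm (dpos (dpow (L t) q)) (dpos (dpow (L t) p)) k n = 0) :
    ∀ (t : ℕ → ℝ) (k n : ℤ),
      deriv (fun τ => L (Function.update t q τ) k n) (t q)
        = dcomm (dpos (dpow (L t) q)) (L t) k n := by
  classical
  -- Basic structure of L
  have hL1 : ∀ (t : ℕ → ℝ) (k : ℤ), 1 ≤ k → L t k = dlam k := by
    intro t k hk
    funext n
    have h := congrFun (congrFun (hform t) k) n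
    simp only [truncGe] at h
    rwa [if_pos hk] at h
  have hLub : ∀ t : ℕ → ℝ, UB 1 (L t) := by
    intro t k hk
    rw [hL1 t k (by omega)]
    funext n
    show dlam k n = 0
    rw [dlam]
    exact if_neg (by omega)
  have hLtop : ∀ (t : ℕ → ℝ) (n : ℤ), L t 1 n = 1 := by
    intro t n
    rw [hL1 t 1 le_rfl]
    simp [dlam]
  -- derivative operator is strictly lower triangular + diagonal
  have hDLub : ∀ t : ℕ → ℝ, UB 0 (DLop q L t) := by
    intro t k hk
    funext n
    show deriv (fun τ => L (Function.update t q τ) k n) (t q) = 0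
    have hfn : (fun τ => L (Function.update t q τ) k n) = fun _ => dlam k n :=
      funext fun τ => congrFun (hL1 _ k (by omega)) n
    rw [hfn, deriv_const]
  -- positive part of L^q
  have hPub : ∀ t : ℕ → ℝ, UB (q : ℤ) (dpos (dpow (L t) q)) := by
    intro t e he
    funext n'
    show (if (0:ℤ) ≤ e then dpow (L t) q e n' else 0) = 0
    rw [dpow_ub (hLub t) q e he]
    simp
  have hNub : ∀ X : DOp, UB (-1) (dneg X) := by
    intro X e he
    funext n'
    show (if e < (0:ℤ) then X e n' else 0) = 0
    rw [if_neg (by omega)]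
  have hsplit : ∀ X : DOp, dpos X = X - dneg X := by
    intro X
    funext e n'
    show (if (0:ℤ) ≤ e then X e n' else 0)
      = X e n' - (if e < (0:ℤ) then X e n' else 0)
    by_cases h : (0:ℤ) ≤ e
    · rw [if_pos h, if_neg (by omega)]; ring
    · rw [if_neg h, if_pos (by omega)]; ring
  have hWub : ∀ t : ℕ → ℝ, UB ((q:ℤ) + 1) (dcomm (dpos (dpow (L t) q)) (L t)) := by
    intro t
    have u1 := (hPub t).dmul (hLub t)
    have u2 := ((hLub t).dmul (hPub t)).mono (by omega : 1 + (q:ℤ) ≤ (q:ℤ) + 1)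
    exact u1.sub u2
  -- derivative of coefficients of powers of L
  have hasDerivAt_dpow : ∀ (t : ℕ → ℝ) (p : ℕ) (k n : ℤ),
      HasDerivAt (fun τ => dpow (L (Function.update t q τ)) p k n)
        (Ssum (L t) (DLop q L t) p k n) (t q) := by
    intro t p
    induction p with
    | zero =>
      intro k n
      have hfn : (fun τ => dpow (L (Function.update t q τ)) 0 k n) = fun _ => done k n := rfl
      have h0 : Ssum (L t) (DLop q L t) 0 k n = 0 := by simp [Ssum]
      rw [hfn, h0]
      exact hasDerivAt_const _ _
    | succ p ih =>
      intro m n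
      have hfun : (fun τ => dpow (L (Function.update t q τ)) (p+1) m n)
          = fun τ => ∑ r ∈ Finset.Icc (m - 1) ((p:ℤ)),
              dpow (L (Function.update t q τ)) p r n
                * L (Function.update t q τ) (m - r) (n + r) := by
        funext τ
        exact dmul_coeff (dpow_ub (hLub _) p) (hLub _) m n
      have hval : (∑ r ∈ Finset.Icc (m - 1) ((p:ℤ)),
            (Ssum (L t) (DLop q L t) p r n * L t (m - r) (n + r)
              + dpow (L t) p r n * DLop q L t (m - r) (n + r)))
          = Ssum (L t) (DLop q L t) (p+1) m n := by
        rw [Finset.sum_add_distrib]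
        have e1 : (∑ r ∈ Finset.Icc (m - 1) ((p:ℤ)),
              Ssum (L t) (DLop q L t) p r n * L t (m - r) (n + r))
            = dmul (Ssum (L t) (DLop q L t) p) (L t) m n := by
          refine (dmul_coeff_sub (Ssum_ub (hLub t) (hDLub t) p) (hLub t) ?_).symm
          intro x hx
          simp only [Finset.mem_Icc] at hx ⊢
          omega
        have e2 : (∑ r ∈ Finset.Icc (m - 1) ((p:ℤ)),
              dpow (L t) p r n * DLop q L t (m - r) (n + r))
            = dmul (dpow (L t) p) (DLop q L t) m n := by
          refine (dmul_coeff_sub (dpow_ub (hLub t) p) (hDLub t) ?_).symm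
          intro x hx
          simp only [Finset.mem_Icc] at hx ⊢
          omega
        rw [e1, e2, ← Ssum_succ (hLub t) (hDLub t) p m n]
      rw [hfun, ← hval]
      apply HasDerivAt.fun_sum
      intro r _
      have h2 : HasDerivAt (fun τ => L (Function.update t q τ) (m - r) (n + r))
          (DLop q L t (m - r) (n + r)) (t q) :=
        (hdiff q hq t (m - r) (n + r)).differentiableAt.hasDerivAt
      have hmul := (ih r n).fun_mul h2
      simpa [Function.update_eq_self] using hmul
  -- Key 1 : M vanishes in positive degrees
  have hK1 : ∀ (t : ℕ → ℝ) (k n : ℤ), 1 ≤ k → Mop q L t k n = 0 := by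
    intro t k n hk
    show DLop q L t k n - dcomm (dpos (dpow (L t) q)) (L t) k n = 0
    have h1 : DLop q L t k n = 0 := congrFun (hDLub t k (by omega)) n
    have h2 : dcomm (dpos (dpow (L t) q)) (L t) k n = 0 := by
      rw [hsplit]
      have hQ := dpow_ub (hLub t) q
      have hN := (hNub (dpow (L t) q)).mono (by omega : (-1:ℤ) ≤ (q:ℤ))
      have u1 : dmul (dneg (dpow (L t) q)) (L t) k n = 0 := by
        rw [(hNub (dpow (L t) q)).dmul (hLub t) k (by omega : (-1:ℤ) + 1 < k)]
        exact Pi.zero_apply n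
      have u2 : dmul (L t) (dneg (dpow (L t) q)) k n = 0 := by
        rw [(hLub t).dmul (hNub (dpow (L t) q)) k (by omega : (1:ℤ) + (-1) < k)]
        exact Pi.zero_apply n
      have hc : dmul (dpow (L t) q) (L t) k n - dmul (L t) (dpow (L t) q) k n = 0 :=
        congrFun (congrFun (dcomm_dpow_self (hLub t) q) k) n
      rw [dcomm_apply, dmul_sub_left hQ hN (hLub t) k n,
        dmul_sub_right (hLub t) hQ hN k n, u1, u2]
      linear_combination hc
    rw [h1, h2, sub_zero]
  -- Key 2 : the Zakharov–Shabat equations kill top coefficients of Ssum M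
  have hK2 : ∀ (p : ℕ), 1 ≤ p → ∀ (t : ℕ → ℝ) (k n : ℤ), (q:ℤ) < k →
      Ssum (L t) (Mop q L t) p k n = 0 := by
    intro p hp t k n hk
    have hzs := hZS p hp t k n
    have ht1 : deriv (fun τ => dpos (dpow (L (Function.update t p τ)) q) k n) (t p) = 0 := by
      have hfn : (fun τ => dpos (dpow (L (Function.update t p τ)) q) k n) = fun _ => 0 := by
        funext τ
        show (if (0:ℤ) ≤ k then dpow (L (Function.update t p τ)) q k n else 0) = 0
        rw [if_pos (by omega), dpow_ub (hLub _) q k (by omega)]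
        rfl
      rw [hfn, deriv_const]
    have ht2 : deriv (fun τ => dpos (dpow (L (Function.update t q τ)) p) k n) (t q)
        = Ssum (L t) (DLop q L t) p k n := by
      have hfn : (fun τ => dpos (dpow (L (Function.update t q τ)) p) k n)
          = fun τ => dpow (L (Function.update t q τ)) p k n := by
        funext τ
        show (if (0:ℤ) ≤ k then dpow (L (Function.update t q τ)) p k n else 0) = _
        rw [if_pos (by omega)]
      rw [hfn]
      exact (hasDerivAt_dpow t p k n).deriv
    have hPp := dpow_ub (hLub t) p
    have hN := (hNub (dpow (L t) p)).mono (by omega : (-1:ℤ) ≤ (p:ℤ))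
    have ht3 : dcomm (dpos (dpow (L t) q)) (dpos (dpow (L t) p)) k n
        = Ssum (L t) (dcomm (dpos (dpow (L t) q)) (L t)) p k n := by
      rw [hsplit (dpow (L t) p)]
      have hPN : dcomm (dpos (dpow (L t) q)) (dpow (L t) p - dneg (dpow (L t) p)) k n
          = dcomm (dpos (dpow (L t) q)) (dpow (L t) p) k n
            - dcomm (dpos (dpow (L t) q)) (dneg (dpow (L t) p)) k n := by
        simp only [dcomm_apply]
        rw [dmul_sub_right (hPub t) hPp hN k n, dmul_sub_left hPp hN (hPub t) k n]
        ring
      have hzero : dcomm (dpos (dpow (L t) q)) (dneg (dpow (L t) p)) k n = 0 := by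
        have u1 : dmul (dpos (dpow (L t) q)) (dneg (dpow (L t) p)) k n = 0 := by
          rw [(hPub t).dmul (hNub (dpow (L t) p)) k (by omega : (q:ℤ) + (-1) < k)]
          exact Pi.zero_apply n
        have u2 : dmul (dneg (dpow (L t) p)) (dpos (dpow (L t) q)) k n = 0 := by
          rw [(hNub (dpow (L t) p)).dmul (hPub t) k (by omega : (-1:ℤ) + (q:ℤ) < k)]
          exact Pi.zero_apply n
        rw [dcomm_apply, u1, u2]
        ring
      rw [hPN, hzero, sub_zero, dcomm_dpow (hLub t) (hPub t) p]
    rw [ht1, ht2, ht3] at hzs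
    have hMs : Ssum (L t) (Mop q L t) p k n
        = Ssum (L t) (DLop q L t) p k n
          - Ssum (L t) (dcomm (dpos (dpow (L t) q)) (L t)) p k n :=
      Ssum_sub (hLub t) ((hDLub t).mono (by omega : (0:ℤ) ≤ (q:ℤ) + 1)) (hWub t) p k n
    rw [hMs]
    linear_combination -hzs
  -- Main induction : M vanishes in all non-positive degrees
  have main : ∀ (j : ℕ) (t : ℕ → ℝ) (n : ℤ), Mop q L t (-(j:ℤ)) n = 0 := by
    intro j
    induction j using Nat.strong_induction_on with
    | _ j IH =>
      intro t n
      have hMub : UB (-(j:ℤ)) (Mop q L t) := by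
        intro e he
        funext n'
        show Mop q L t e n' = 0
        rcases le_or_gt 1 e with h | h
        · exact hK1 t e n' h
        · have he' : ∃ j' : ℕ, j' < j ∧ -(j' : ℤ) = e := ⟨(-e).toNat, by omega, by omega⟩
          obtain ⟨j', _hj', rfl⟩ := he'
          exact IH j' _hj' t n'
      set p : ℕ := q + j + 2 with hp
      have hsum : ∀ (pp : ℕ) (m : ℤ),
          Ssum (L t) (Mop q L t) pp ((pp:ℤ) - 1 + (-(j:ℤ))) m
            = ∑ i ∈ Finset.range pp, Mop q L t (-(j:ℤ)) (m + (i:ℤ)) := by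
        intro pp m
        show (∑ i ∈ Finset.range pp, dmul (dmul (dpow (L t) i) (Mop q L t))
            (dpow (L t) (pp - 1 - i)) ((pp:ℤ) - 1 + (-(j:ℤ))) m) = _
        apply Finset.sum_congr rfl
        intro i hi
        exact Ssum_term_coeff (hLub t) (hLtop t) hMub (Finset.mem_range.mp hi) m
      have hzero : ∀ (pp : ℕ), 1 ≤ pp → (q:ℤ) < (pp:ℤ) - 1 + (-(j:ℤ)) → ∀ m : ℤ,
          (∑ i ∈ Finset.range pp, Mop q L t (-(j:ℤ)) (m + (i:ℤ))) = 0 := by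
        intro pp hpp hlt m
        rw [← hsum pp m]
        exact hK2 pp hpp t _ m hlt
      have h1 := hzero (p+1) (by omega) (by push_cast; omega) (n - (p:ℤ))
      have h2 := hzero p (by omega) (by push_cast; omega) (n - (p:ℤ))
      rw [Finset.sum_range_succ] at h1
      have h3 : Mop q L t (-(j:ℤ)) ((n - (p:ℤ)) + (p:ℤ)) = 0 := by
        linear_combination h1 - h2
      simpa using h3
  -- Conclusion
  intro t k n
  have hM : Mop q L t k n = 0 := by
    rcases le_or_gt 1 k with h | h
    · exact hK1 t k n h
    · have hkk : ∃ j : ℕ, -(j:ℤ) = k := ⟨(-k).toNat, by omega⟩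
      obtain ⟨j, rfl⟩ := hkk
      exact main j t n
  have hM' : DLop q L t k n - dcomm (dpos (dpow (L t) q)) (L t) k n = 0 := hM
  have hdef : DLop q L t k n = deriv (fun τ => L (Function.update t q τ) k n) (t q) := rfl
  rw [hdef] at hM'
  linear_combination hM'
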